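/- arXiv:1606.06478 — 3 statements merged into one kernel-verified Lean document; each statement's English description precedes it below -/
import Mathlib

section
/- Let N be a finitely generated, semipositive, separated binoid. Then the Hilbert-Kunz function HKF(N,q) = #(N/[q]N₊) is eventually constant in q if and only if N is finite. -/
/-!  Basic theory of (commutative) binoids: a commutative monoid together with
an absorbing element `infty`.  We use a bundled structure `BinoidOn X`. -/

structure BinoidOn (X : Type u) where
  add : X → X → X
  zero : X
  infty : X
  add_assoc : ∀ a b c : X, add (add a b) c = add a (add b c)
  add_comm : ∀ a b : X, add a b = add b a
  zero_add : ∀ a : X, add zero a = a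
  infty_add : ∀ a : X, add infty a = infty

namespace BinoidOn

variable {X : Type u} {Y : Type v} (B : BinoidOn X) (C : BinoidOn Y)

/-- `n`-fold multiple `n • a`. -/
def smul (B : BinoidOn X) : ℕ → X → X
  | 0, _ => B.zero
  | n + 1, a => B.add a (smul B n a)

/-- Sum of a list of elements. -/
def listSum (l : List X) : X := l.foldr B.add B.zero

/-- An ideal of a binoid: a nonempty subset `I` with `I + N ⊆ I`. -/
def IsIdeal (I : Set X) : Prop := I.Nonempty ∧ ∀ a ∈ I, ∀ x : X, B.add a x ∈ I

/-- A subbinoid: a submonoid containing `infty`. -/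
def IsSubbinoid (M : Set X) : Prop :=
  B.zero ∈ M ∧ B.infty ∈ M ∧ ∀ a ∈ M, ∀ b ∈ M, B.add a b ∈ M

/-- The set of units. -/
def unitsSet : Set X := {u | ∃ a, B.add u a = B.zero}

/-- `N₊`, the ideal of non-units. -/
def nplus : Set X := (B.unitsSet)ᶜ

/-- The ideal generated by a set. -/
def genIdeal (S : Set X) : Set X := {x | ∃ a ∈ S, ∃ n, x = B.add a n}

/-- The `n`-fold sum `nI = {a₁ + ⋯ + aₙ | aᵢ ∈ I}`. -/
def nSum (n : ℕ) (I : Set X) : Set X :=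
  {x | ∃ l : List X, l.length = n ∧ (∀ a ∈ l, a ∈ I) ∧ x = B.listSum l}

/-- The Frobenius power `[q]I`: the ideal generated by `{q • a | a ∈ I}`. -/
def frob (q : ℕ) (I : Set X) : Set X := B.genIdeal {x | ∃ a ∈ I, x = B.smul q a}

/-- The radical of an ideal. -/
def radical (I : Set X) : Set X := {a | ∃ n : ℕ, 0 < n ∧ B.smul n a ∈ I}

/-- `N₊`-primary ideal. -/
def IsPrimary (I : Set X) : Prop := B.radical I = B.nplus

/-- Finitely generated binoid. -/
def FG : Prop :=
  ∃ G : Finset X, ∀ x : X, x = B.infty ∨ ∃ l : List X, (∀ a ∈ l, a ∈ G) ∧ x = B.listSum l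

/-- Semipositive: a nonzero binoid with finitely many units. -/
def Semipositive : Prop := B.zero ≠ B.infty ∧ B.unitsSet.Finite

/-- Prime ideal. -/
def IsPrime (P : Set X) : Prop :=
  B.IsIdeal P ∧ P ≠ Set.univ ∧ ∀ a b : X, B.add a b ∈ P → a ∈ P ∨ b ∈ P

/-- The (combinatorial) dimension of the binoid is `d`: there is a strictly
increasing chain of prime ideals of length `d`, and no longer one. -/
def HasDim (d : ℕ) : Prop :=
  (∃ c : Fin (d + 1) → Set X, StrictMono c ∧ ∀ i, B.IsPrime (c i)) ∧
    ∀ (k : ℕ) (c : Fin (k + 1) → Set X), StrictMono c → (∀ i, B.IsPrime (c i)) → k ≤ d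

end BinoidOn

/-- The setoid collapsing a subset `A` to a single point (Rees congruence). -/
def collapseSetoid {X : Type u} (A : Set X) : Setoid X where
  r x y := x = y ∨ (x ∈ A ∧ y ∈ A)
  iseqv := ⟨fun _ => Or.inl rfl,
    fun h => h.elim (fun e => Or.inl e.symm) (fun h => Or.inr ⟨h.2, h.1⟩),
    fun h1 h2 => by
      rcases h1 with rfl | h1
      · exact h2
      · rcases h2 with rfl | h2
        · exact Or.inr h1
        · exact Or.inr ⟨h1.1, h2.2⟩⟩

namespace BinoidOn

variable {X : Type u} {Y : Type v} (B : BinoidOn X) (C : BinoidOn Y)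

/-- The underlying set of the Rees quotient `N/I` (we collapse the ideal
generated by `I`; for an ideal `I` this is `I` itself). -/
abbrev ReesQuot (I : Set X) : Type u := Quotient (collapseSetoid (B.genIdeal I))

lemma genIdeal_closed {I : Set X} {a : X} (ha : a ∈ B.genIdeal I) (x : X) :
    B.add a x ∈ B.genIdeal I := by
  obtain ⟨b, hb, n, rfl⟩ := ha
  exact ⟨b, hb, B.add n x, (B.add_assoc b n x)⟩

/-- The Rees quotient binoid `N/I`. -/
def quotB (I : Set X) : BinoidOn (B.ReesQuot I) where
  add := Quotient.map₂ B.add (by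
    rintro a a' (rfl | ⟨ha, ha'⟩) b b' (rfl | ⟨hb, hb'⟩)
    · exact Or.inl rfl
    · exact Or.inr ⟨by rw [B.add_comm]; exact B.genIdeal_closed hb _,
        by rw [B.add_comm]; exact B.genIdeal_closed hb' _⟩
    · exact Or.inr ⟨B.genIdeal_closed ha _, B.genIdeal_closed ha' _⟩
    · exact Or.inr ⟨B.genIdeal_closed ha _, B.genIdeal_closed ha' _⟩)
  zero := Quotient.mk _ B.zero
  infty := Quotient.mk _ B.infty
  add_assoc := by
    rintro ⟨a⟩ ⟨b⟩ ⟨c⟩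
    exact congrArg (Quotient.mk _) (B.add_assoc a b c)
  add_comm := by
    rintro ⟨a⟩ ⟨b⟩
    exact congrArg (Quotient.mk _) (B.add_comm a b)
  zero_add := by
    rintro ⟨a⟩
    exact congrArg (Quotient.mk _) (B.zero_add a)
  infty_add := by
    rintro ⟨a⟩
    exact congrArg (Quotient.mk _) (B.infty_add a)

/-- The underlying set of `N/[q]N₊`. -/
abbrev hkQuot (q : ℕ) : Type u := Quotient (collapseSetoid (B.frob q B.nplus))

/-- The Hilbert–Kunz function `HKF(N,q) = #(N/[q]N₊)`, where `#S = |S| - 1`. -/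
noncomputable def hkf (q : ℕ) : ℕ := Nat.card (B.hkQuot q) - 1

/-- Pairs with an `infty` coordinate. -/
def inftyPairs : Set (X × Y) := {p | p.1 = B.infty ∨ p.2 = C.infty}

/-- Carrier of the smash product `M ∧ N`. -/
abbrev SmashCarrier : Type _ := Quotient (collapseSetoid (B.inftyPairs C))

lemma inftyPairs_add_left {p q : X × Y} (hp : p ∈ B.inftyPairs C) :
    (B.add p.1 q.1, C.add p.2 q.2) ∈ B.inftyPairs C := by
  rcases hp with h | h
  · exact Or.inl (by rw [h, B.infty_add])
  · exact Or.inr (by rw [h, C.infty_add])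

lemma inftyPairs_add_right {p q : X × Y} (hq : q ∈ B.inftyPairs C) :
    (B.add p.1 q.1, C.add p.2 q.2) ∈ B.inftyPairs C := by
  rcases hq with h | h
  · exact Or.inl (by rw [h, B.add_comm, B.infty_add])
  · exact Or.inr (by rw [h, C.add_comm, C.infty_add])

/-- The smash product binoid `M ∧ N`. -/
def smash : BinoidOn (B.SmashCarrier C) where
  add := Quotient.map₂ (fun p q => (B.add p.1 q.1, C.add p.2 q.2)) (by
    rintro p p' (rfl | ⟨hp, hp'⟩) q q' (rfl | ⟨hq, hq'⟩)
    · exact Or.inl rfl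
    · exact Or.inr ⟨B.inftyPairs_add_right C hq, B.inftyPairs_add_right C hq'⟩
    · exact Or.inr ⟨B.inftyPairs_add_left C hp, B.inftyPairs_add_left C hp'⟩
    · exact Or.inr ⟨B.inftyPairs_add_left C hp, B.inftyPairs_add_left C hp'⟩)
  zero := Quotient.mk _ (B.zero, C.zero)
  infty := Quotient.mk _ (B.infty, C.infty)
  add_assoc := by
    rintro ⟨a⟩ ⟨b⟩ ⟨c⟩
    exact congrArg (Quotient.mk _)
      (Prod.ext (B.add_assoc _ _ _) (C.add_assoc _ _ _))
  add_comm := by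
    rintro ⟨a⟩ ⟨b⟩
    exact congrArg (Quotient.mk _)
      (Prod.ext (B.add_comm _ _) (C.add_comm _ _))
  zero_add := by
    rintro ⟨a⟩
    exact congrArg (Quotient.mk _)
      (Prod.ext (B.zero_add _) (C.zero_add _))
  infty_add := by
    rintro ⟨a⟩
    exact congrArg (Quotient.mk _)
      (Prod.ext (B.infty_add _) (C.infty_add _))

end BinoidOn

/-- An `N`-set: a pointed set with an operation of the binoid. -/
structure NSetOn {X : Type u} (B : BinoidOn X) (S : Type w) where
  pt : S
  act : X → S → S
  act_zero : ∀ s, act B.zero s = s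
  act_infty : ∀ s, act B.infty s = pt
  act_pt : ∀ n, act n pt = pt
  act_add : ∀ n m s, act (B.add n m) s = act n (act m s)

section NSet

variable {X : Type u} {S : Type w} {B : BinoidOn X}

/-- One step of the connectedness relation on `S ∖ {p}`. -/
def NStep (σ : NSetOn B S) (s t : S) : Prop :=
  s ≠ σ.pt ∧ t ≠ σ.pt ∧ ∃ n, n ≠ B.infty ∧ (σ.act n s = t ∨ σ.act n t = s)

/-- The connectedness (equivalence) relation `∼_N` on `S ∖ {p}`. -/
def NConn (σ : NSetOn B S) : S → S → Prop := Relation.ReflTransGen (NStep σ)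

/-- `N`-subsets of an `N`-set. -/
def IsNSubset (σ : NSetOn B S) (T : Set S) : Prop :=
  σ.pt ∈ T ∧ ∀ n : X, ∀ s ∈ T, σ.act n s ∈ T

/-- `T` is a pointed union of two nontrivial `N`-subsets. -/
def IsReducibleSet (σ : NSetOn B S) (T : Set S) : Prop :=
  ∃ A A' : Set S, IsNSubset σ A ∧ IsNSubset σ A' ∧
    A ≠ {σ.pt} ∧ A' ≠ {σ.pt} ∧ A ∪ A' = T ∧ A ∩ A' = {σ.pt}

/-- An irreducible `N`-subset. -/
def IsIrreducibleSet (σ : NSetOn B S) (T : Set S) : Prop :=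
  IsNSubset σ T ∧ T ≠ {σ.pt} ∧ ¬ IsReducibleSet σ T

end NSet

/-- The trivial binoid `{0, ∞}`, realized on `Bool` (`false = 0`, `true = ∞`). -/
def trivB : BinoidOn Bool where
  add := or
  zero := false
  infty := true
  add_assoc := by decide
  add_comm := by decide
  zero_add := by decide
  infty_add := by decide

/-- The binoid `M^∞` obtained from a commutative monoid by adjoining `∞ = ⊤`. -/
def withTopBinoid (M : Type u) [AddCommMonoid M] : BinoidOn (WithTop M) where
  add := (· + ·)
  zero := 0
  infty := ⊤
  add_assoc := add_assoc
  add_comm := add_comm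
  zero_add := zero_add
  infty_add := fun a => WithTop.top_add a


namespace BinoidOn

variable {X : Type u} (B : BinoidOn X)

lemma add_infty' (a : X) : B.add a B.infty = B.infty := by
  rw [B.add_comm, B.infty_add]

lemma add_zero' (a : X) : B.add a B.zero = a := by
  rw [B.add_comm, B.zero_add]

lemma listSum_nil' : B.listSum ([] : List X) = B.zero := rfl

lemma listSum_cons (a : X) (l : List X) :
    B.listSum (a :: l) = B.add a (B.listSum l) := rfl

lemma listSum_append (l l' : List X) :
    B.listSum (l ++ l') = B.add (B.listSum l) (B.listSum l') := by
  induction l with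
  | nil => simp [listSum_nil', B.zero_add]
  | cons a t ih => simp only [List.cons_append, listSum_cons, ih, B.add_assoc]

lemma listSum_perm {l l' : List X} (h : l.Perm l') : B.listSum l = B.listSum l' := by
  induction h with
  | nil => rfl
  | cons a _ ih => simp only [listSum_cons, ih]
  | swap a b t =>
      simp only [listSum_cons, ← B.add_assoc, B.add_comm b a]
  | trans _ _ ih1 ih2 => exact ih1.trans ih2

lemma smul_succ (n : ℕ) (a : X) : B.smul (n + 1) a = B.add a (B.smul n a) := rfl

lemma listSum_replicate (q : ℕ) (a : X) :
    B.listSum (List.replicate q a) = B.smul q a := by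
  induction q with
  | zero => rfl
  | succ n ih => rw [List.replicate_succ, listSum_cons, ih, smul_succ]

lemma smul_add_dist (m n : ℕ) (a : X) :
    B.smul (m + n) a = B.add (B.smul m a) (B.smul n a) := by
  induction n with
  | zero => rw [Nat.add_zero]; exact (B.add_zero' _).symm
  | succ k ih =>
      show B.smul ((m + k) + 1) a = _
      rw [smul_succ, ih, smul_succ, ← B.add_assoc, B.add_comm a (B.smul m a), B.add_assoc]

lemma smul_infty {q : ℕ} (hq : 1 ≤ q) : B.smul q B.infty = B.infty := by
  obtain ⟨k, rfl⟩ := Nat.exists_eq_add_of_le hq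
  rw [Nat.add_comm, smul_succ, B.infty_add]

lemma unit_of_add_unit {a b : X} (h : B.add a b ∈ B.unitsSet) : a ∈ B.unitsSet := by
  obtain ⟨c, hc⟩ := h
  exact ⟨B.add b c, by rw [← B.add_assoc]; exact hc⟩

lemma add_mem_units {a b : X} (ha : a ∈ B.unitsSet) (hb : b ∈ B.unitsSet) :
    B.add a b ∈ B.unitsSet := by
  obtain ⟨c, hc⟩ := ha; obtain ⟨d, hd⟩ := hb
  refine ⟨B.add c d, ?_⟩
  calc B.add (B.add a b) (B.add c d)
      = B.add a (B.add b (B.add c d)) := B.add_assoc _ _ _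
    _ = B.add a (B.add c (B.add b d)) := by
        rw [← B.add_assoc b c d, B.add_comm b c, B.add_assoc]
    _ = B.add (B.add a c) (B.add b d) := (B.add_assoc _ _ _).symm
    _ = B.zero := by rw [hc, hd, B.zero_add]

lemma zero_mem_units : B.zero ∈ B.unitsSet := ⟨B.zero, B.zero_add _⟩

lemma add_mem_nplus {a : X} (ha : a ∈ B.nplus) (b : X) : B.add a b ∈ B.nplus :=
  fun h => ha (B.unit_of_add_unit h)

lemma infty_mem_nplus (h0 : B.zero ≠ B.infty) : B.infty ∈ B.nplus := by
  rintro ⟨a, ha⟩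
  exact h0 (by rw [← ha, B.infty_add])

lemma listSum_units {l : List X} (h : ∀ a ∈ l, a ∈ B.unitsSet) :
    B.listSum l ∈ B.unitsSet := by
  induction l with
  | nil => exact B.zero_mem_units
  | cons a t ih =>
      exact B.add_mem_units (h a (List.mem_cons_self))
        (ih fun b hb => h b (List.mem_cons_of_mem _ hb))

lemma listSum_nplus {l : List X} (hne : l ≠ []) (h : ∀ a ∈ l, a ∈ B.nplus) :
    B.listSum l ∈ B.nplus := by
  cases l with
  | nil => exact absurd rfl hne
  | cons a t => exact B.add_mem_nplus (h a (List.mem_cons_self)) _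

lemma nSum_antitone {n m : ℕ} (hn : 1 ≤ n) (hnm : n ≤ m) :
    B.nSum m B.nplus ⊆ B.nSum n B.nplus := by
  rintro x ⟨l, hlen, hmem, rfl⟩
  have hn1 : n - 1 < m := lt_of_lt_of_le (Nat.sub_lt hn one_pos) hnm
  refine ⟨l.take (n - 1) ++ [B.listSum (l.drop (n - 1))], ?_, ?_, ?_⟩
  · rw [List.length_append, List.length_take, List.length_singleton, hlen,
      min_eq_left (le_of_lt hn1)]
    omega
  · intro a ha
    rcases List.mem_append.mp ha with h | h
    · exact hmem a (List.mem_of_mem_take h)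
    · rw [List.mem_singleton] at h
      subst h
      refine B.listSum_nplus ?_ (fun b hb => hmem b (List.mem_of_mem_drop hb))
      rw [← List.length_pos_iff, List.length_drop, hlen]
      omega
  · rw [listSum_append, listSum_cons, listSum_nil', B.add_zero', ← listSum_append,
      List.take_append_drop]

lemma frob_subset_nSum {q : ℕ} (hq : 1 ≤ q) :
    B.frob q B.nplus ⊆ B.nSum q B.nplus := by
  obtain ⟨k, rfl⟩ : ∃ k, q = k + 1 := ⟨q - 1, (Nat.succ_pred_eq_of_pos hq).symm⟩
  rintro x ⟨y, ⟨a, ha, rfl⟩, n, rfl⟩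
  refine ⟨List.replicate k a ++ [B.add a n], ?_, ?_, ?_⟩
  · rw [List.length_append, List.length_replicate, List.length_singleton]
  · intro b hb
    rcases List.mem_append.mp hb with h | h
    · rw [List.eq_of_mem_replicate h]; exact ha
    · rw [List.mem_singleton] at h; subst h; exact B.add_mem_nplus ha n
  · rw [listSum_append, listSum_replicate, listSum_cons, listSum_nil', B.add_zero',
      smul_succ, ← B.add_assoc, B.add_comm (B.smul k a) a, B.add_assoc]

lemma frob_antitone {q q' : ℕ} (h : q ≤ q') :
    B.frob q' B.nplus ⊆ B.frob q B.nplus := by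
  rintro x ⟨y, ⟨a, ha, rfl⟩, n, rfl⟩
  refine ⟨B.smul q a, ⟨a, ha, rfl⟩, B.add (B.smul (q' - q) a) n, ?_⟩
  rw [← B.add_assoc, ← smul_add_dist, Nat.add_sub_cancel' h]

lemma infty_mem_frob {q : ℕ} (hq : 1 ≤ q) (h0 : B.zero ≠ B.infty) :
    B.infty ∈ B.frob q B.nplus :=
  ⟨B.infty, ⟨B.infty, B.infty_mem_nplus h0, (B.smul_infty hq).symm⟩,
    B.infty, (B.infty_add _).symm⟩

end BinoidOn

/-- Cardinality of a collapse quotient. -/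
lemma card_collapse {X : Type u} {A : Set X} (hA : A.Nonempty) (hfin : Aᶜ.Finite) :
    Nat.card (Quotient (collapseSetoid A)) = Aᶜ.ncard + 1 := by
  classical
  haveI : Finite ↥(Aᶜ) := hfin
  let f : X → Option ↥(Aᶜ) := fun x => if h : x ∈ A then none else some ⟨x, h⟩
  have hresp : ∀ x y, (collapseSetoid A).r x y → f x = f y := by
    rintro x y (rfl | ⟨hx, hy⟩)
    · rfl
    · simp only [f, dif_pos hx, dif_pos hy]
  have hbij : Function.Bijective (Quotient.lift f hresp) := by
    constructor
    · rintro ⟨x⟩ ⟨y⟩ hxy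
      change f x = f y at hxy
      apply Quotient.sound
      by_cases hx : x ∈ A <;> by_cases hy : y ∈ A
      · exact Or.inr ⟨hx, hy⟩
      · simp [f, dif_pos hx, dif_neg hy] at hxy
      · simp [f, dif_neg hx, dif_pos hy] at hxy
      · simp only [f, dif_neg hx, dif_neg hy, Option.some.injEq, Subtype.mk.injEq] at hxy
        exact Or.inl hxy
    · rintro (_ | ⟨x, hx⟩)
      · obtain ⟨a, ha⟩ := hA
        exact ⟨Quotient.mk _ a, by simp [f, dif_pos ha]⟩
      · exact ⟨Quotient.mk _ x, by simp [f, dif_neg hx]⟩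
  rw [Nat.card_eq_of_bijective _ hbij, Finite.card_option, Nat.card_coe_set_eq]

namespace BinoidOn

variable {X : Type u} (B : BinoidOn X)

lemma exists_subtype_list {S : Set X} :
    ∀ l : List X, (∀ a ∈ l, a ∈ S) → ∃ l' : List ↥S, l'.map Subtype.val = l := by
  intro l
  induction l with
  | nil => exact fun _ => ⟨[], rfl⟩
  | cons a t ih =>
    intro h
    obtain ⟨t', ht⟩ := ih (fun b hb => h b (List.mem_cons_of_mem _ hb))
    exact ⟨⟨a, h a (List.mem_cons_self)⟩ :: t', by simp [ht]⟩

lemma compl_frob_finite (hfg : B.FG) (hsp : B.Semipositive) {q : ℕ} (hq : 1 ≤ q) :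
    ((B.frob q B.nplus)ᶜ).Finite := by
  classical
  obtain ⟨G, hG⟩ := hfg
  set K := q * G.card + 1 with hK
  haveI : Finite ↥(G : Set X) := G.finite_toSet.to_subtype
  have hLfin : ((fun l : List ↥(G : Set X) => l.map Subtype.val) ''
      {l | l.length < K}).Finite := (List.finite_length_lt _ K).image _
  have hF := (hsp.2.prod hLfin).image (fun p : X × List X => B.add p.1 (B.listSum p.2))
  refine (hF.insert B.infty).subset ?_
  intro x hx
  by_cases hxi : x = B.infty
  · exact Set.mem_insert_iff.mpr (Or.inl hxi)
  rcases hG x with h | ⟨l, hlG, rfl⟩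
  · exact absurd h hxi
  right
  set P : X → Bool := fun a => decide (a ∈ B.unitsSet) with hP
  have hperm := List.filter_append_perm P l
  set l₁ := l.filter P with hl₁
  set l₂ := l.filter (fun a => !P a) with hl₂
  have hsum : B.listSum l = B.add (B.listSum l₁) (B.listSum l₂) := by
    rw [← B.listSum_append]; exact (B.listSum_perm hperm).symm
  have hl₁u : B.listSum l₁ ∈ B.unitsSet := B.listSum_units (by
    intro a ha
    have := List.of_mem_filter ha
    simpa [hP] using this)
  have hl₂n : ∀ a ∈ l₂, a ∈ B.nplus := by
    intro a ha
    have := List.of_mem_filter ha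
    exact (by simpa [hP] using this : a ∉ B.unitsSet)
  have hl₂G : ∀ a ∈ l₂, a ∈ (G : Set X) := fun a ha => hlG a (List.mem_of_mem_filter ha)
  by_cases hlen : l₂.length < K
  · obtain ⟨l', hl'⟩ := exists_subtype_list (S := (G : Set X)) l₂ hl₂G
    refine ⟨(B.listSum l₁, l₂), ⟨hl₁u, ⟨l', ?_, hl'⟩⟩, hsum.symm⟩
    have : l'.length = l₂.length := by rw [← hl', List.length_map]
    simpa [Set.mem_setOf_eq, this] using hlen
  · exfalso
    apply hx
    have hcount : ∃ g ∈ G, q < Multiset.count g (↑l₂ : Multiset X) := by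
      apply Finset.exists_lt_of_sum_lt (f := fun _ => q)
        (g := fun a => Multiset.count a (↑l₂ : Multiset X))
      have hsub : (↑l₂ : Multiset X).toFinset ⊆ G := by
        intro a ha
        exact hl₂G a (by simpa using Multiset.mem_toFinset.mp ha)
      calc ∑ _g ∈ G, q = q * G.card := by rw [Finset.sum_const, smul_eq_mul, mul_comm]
        _ < K := Nat.lt_succ_self _
        _ ≤ l₂.length := Nat.not_lt.mp hlen
        _ = Multiset.card (↑l₂ : Multiset X) := by simp
        _ = ∑ a ∈ (↑l₂ : Multiset X).toFinset, Multiset.count a (↑l₂ : Multiset X) :=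
            (Multiset.toFinset_sum_count_eq _).symm
        _ ≤ ∑ a ∈ G, Multiset.count a (↑l₂ : Multiset X) :=
            Finset.sum_le_sum_of_subset hsub
    obtain ⟨g, hgG, hgc⟩ := hcount
    have hgmem : g ∈ l₂ := by
      have : 0 < Multiset.count g (↑l₂ : Multiset X) := lt_of_le_of_lt (Nat.zero_le _) hgc
      simpa using Multiset.count_pos.mp this
    have hgn : g ∈ B.nplus := hl₂n g hgmem
    have hrep : Multiset.replicate q g ≤ (↑l₂ : Multiset X) :=
      Multiset.le_count_iff_replicate_le.mp (le_of_lt hgc)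
    obtain ⟨u, hu⟩ := Multiset.le_iff_exists_add.mp hrep
    have hco : ((List.replicate q g ++ u.toList : List X) : Multiset X)
        = Multiset.replicate q g + u := by
      rw [← Multiset.coe_add, Multiset.coe_replicate, Multiset.coe_toList]
    have hperm2 : l₂.Perm (List.replicate q g ++ u.toList) :=
      Multiset.coe_eq_coe.mp (hu.trans hco.symm)
    have hsplit : B.listSum l₂ = B.add (B.smul q g) (B.listSum u.toList) := by
      rw [B.listSum_perm hperm2, B.listSum_append, B.listSum_replicate]
    refine ⟨B.smul q g, ⟨g, hgn, rfl⟩, B.add (B.listSum u.toList) (B.listSum l₁), ?_⟩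
    rw [hsum, hsplit, B.add_comm (B.listSum l₁), B.add_assoc]

lemma hkf_eq_ncard {q : ℕ} (hq : 1 ≤ q) (h0 : B.zero ≠ B.infty)
    (hfin : ((B.frob q B.nplus)ᶜ).Finite) :
    B.hkf q = ((B.frob q B.nplus)ᶜ).ncard := by
  unfold hkf
  rw [card_collapse ⟨_, B.infty_mem_frob hq h0⟩ hfin]
  omega

end BinoidOn

/-- For a finitely generated, semipositive, separated binoid `N`,
the Hilbert–Kunz function `HKF(N, q)` is eventually constant iff `N` is finite. -/
theorem stmt15 {X : Type} (B : BinoidOn X) (hfg : B.FG) (hsp : B.Semipositive)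
    (hsep : (⋂ n ∈ Set.Ici 1, B.nSum n B.nplus) = {B.infty}) :
    (∃ q0 c : ℕ, ∀ q ≥ q0, B.hkf q = c) ↔ Finite X := by
  classical
  have h0 : B.zero ≠ B.infty := hsp.1
  have hsep' : ∀ x : X, x ≠ B.infty → ∃ n, 1 ≤ n ∧ x ∉ B.nSum n B.nplus := by
    intro x hx
    by_contra hcon
    push_neg at hcon
    have hx2 : x ∈ ⋂ n ∈ Set.Ici 1, B.nSum n B.nplus := by
      rw [Set.mem_iInter₂]; exact fun n hn => hcon n hn
    rw [hsep] at hx2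
    exact hx hx2
  constructor
  · rintro ⟨q0, c, hc⟩
    set q1 := max q0 1 with hq1def
    have hq1 : 1 ≤ q1 := le_max_right _ _
    have hfin : ∀ q, 1 ≤ q → ((B.frob q B.nplus)ᶜ).Finite :=
      fun q hq => B.compl_frob_finite hfg hsp hq
    have hcard : ∀ q, q1 ≤ q → ((B.frob q B.nplus)ᶜ).ncard = c := by
      intro q hqq
      have hq : 1 ≤ q := le_trans hq1 hqq
      rw [← B.hkf_eq_ncard hq h0 (hfin q hq)]
      exact hc q (le_trans (le_max_left _ _) hqq)
    have heq : ∀ q, q1 ≤ q → (B.frob q1 B.nplus)ᶜ = (B.frob q B.nplus)ᶜ := by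
      intro q hqq
      refine Set.eq_of_subset_of_ncard_le ?_ ?_ (hfin q (le_trans hq1 hqq))
      · exact Set.compl_subset_compl.mpr (B.frob_antitone hqq)
      · rw [hcard q hqq, hcard q1 le_rfl]
    have hsub : (Set.univ : Set X) ⊆ insert B.infty ((B.frob q1 B.nplus)ᶜ) := by
      intro x _
      by_cases hx : x = B.infty
      · exact Set.mem_insert_iff.mpr (Or.inl hx)
      obtain ⟨n, hn1, hn⟩ := hsep' x hx
      have hx2 : x ∈ (B.frob (max n q1) B.nplus)ᶜ := by
        intro hmem
        exact hn (B.nSum_antitone hn1 (le_max_left _ _)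
          (B.frob_subset_nSum (le_trans hq1 (le_max_right _ _)) hmem))
      rw [← heq (max n q1) (le_max_right _ _)] at hx2
      exact Set.mem_insert_iff.mpr (Or.inr hx2)
    exact Set.finite_univ_iff.mp (((hfin q1 hq1).insert _).subset hsub)
  · intro hX
    have htot : ∀ x : X, ∃ n, 1 ≤ n ∧ (x ≠ B.infty → x ∉ B.nSum n B.nplus) := by
      intro x
      by_cases hx : x = B.infty
      · exact ⟨1, le_rfl, fun h => absurd hx h⟩
      · obtain ⟨n, hn1, hn⟩ := hsep' x hx
        exact ⟨n, hn1, fun _ => hn⟩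
    choose f hf1 hf2 using htot
    obtain ⟨q0, hq0⟩ := Set.Finite.bddAbove (Set.finite_range f)
    have hq0' : ∀ x, f x ≤ q0 := fun x => hq0 (Set.mem_range_self x)
    have hq01 : 1 ≤ q0 := le_trans (hf1 B.infty) (hq0' B.infty)
    refine ⟨q0, ({B.infty}ᶜ : Set X).ncard, ?_⟩
    intro q hq
    have hq1 : 1 ≤ q := le_trans hq01 hq
    have hfrob : B.frob q B.nplus = {B.infty} := by
      apply Set.Subset.antisymm
      · intro y hy
        by_contra hyne
        rw [Set.mem_singleton_iff] at hyne
        exact hf2 y hyne (B.nSum_antitone (hf1 y) (le_trans (hq0' y) hq)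
          (B.frob_subset_nSum hq1 hy))
      · intro y hy
        rw [Set.mem_singleton_iff] at hy
        subst hy
        exact B.infty_mem_frob hq1 h0
    show Nat.card (Quotient (collapseSetoid (B.frob q B.nplus))) - 1 = _
    rw [hfrob, card_collapse (A := ({B.infty} : Set X)) ⟨B.infty, rfl⟩ (Set.toFinite _)]
    omega
end

section
/- Let N be a finitely generated, semipositive binoid. Then HKF(N^sep, q) = HKF(N, q) for all q, where N^sep = N/⋂ₙ nN₊ is the separation; that is, N^sep/[q](N^sep)₊ ≅ N/[q]N₊. -/
section Aux

open BinoidOn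
open scoped Classical

variable {X : Type} (B : BinoidOn X)

lemma aux_add_zero (a : X) : B.add a B.zero = a := by
  rw [B.add_comm]; exact B.zero_add a

lemma aux_add_infty (a : X) : B.add a B.infty = B.infty := by
  rw [B.add_comm]; exact B.infty_add a

lemma aux_add_left_comm (a b c : X) :
    B.add a (B.add b c) = B.add b (B.add a c) := by
  rw [← B.add_assoc, B.add_comm a b, B.add_assoc]

lemma aux_add_add_add (a b c d : X) :
    B.add (B.add a b) (B.add c d) = B.add (B.add a c) (B.add b d) := by
  rw [B.add_assoc, aux_add_left_comm B b c d, ← B.add_assoc]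

lemma aux_listSum_cons (a : X) (l : List X) :
    B.listSum (a :: l) = B.add a (B.listSum l) := rfl

lemma aux_listSum_perm {l l' : List X} (h : l.Perm l') :
    B.listSum l = B.listSum l' := by
  induction h with
  | nil => rfl
  | cons x _ ih => simp only [aux_listSum_cons, ih]
  | swap x y l => simp only [aux_listSum_cons, aux_add_left_comm]
  | trans _ _ ih1 ih2 => rw [ih1, ih2]

lemma aux_listSum_infty {l : List X} (h : B.infty ∈ l) :
    B.listSum l = B.infty := by
  induction l with
  | nil => simp at h
  | cons a l ih =>
    rcases List.mem_cons.1 h with rfl | h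
    · exact B.infty_add _
    · rw [aux_listSum_cons, ih h, aux_add_infty]

lemma aux_listSum_units {l : List X} (h : ∀ b ∈ l, b ∈ B.unitsSet) :
    B.listSum l ∈ B.unitsSet := by
  induction l with
  | nil => exact ⟨B.zero, B.zero_add _⟩
  | cons a l ih =>
    obtain ⟨u, hu⟩ := h a List.mem_cons_self
    obtain ⟨v, hv⟩ := ih fun b hb => h b (List.mem_cons_of_mem _ hb)
    exact ⟨B.add u v, by rw [aux_listSum_cons, aux_add_add_add, hu, hv, B.zero_add]⟩

lemma aux_smul_succ (n : ℕ) (a : X) :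
    B.smul (n + 1) a = B.add a (B.smul n a) := rfl

lemma aux_infty_nplus (hsp : B.Semipositive) : B.infty ∈ B.nplus := by
  rintro ⟨a, ha⟩
  exact hsp.1 (by rw [← ha, B.infty_add])

lemma aux_smul_infty {q : ℕ} (hq : 1 ≤ q) : B.smul q B.infty = B.infty := by
  obtain ⟨q, rfl⟩ := Nat.exists_eq_add_of_le hq
  rw [Nat.add_comm, aux_smul_succ, B.infty_add]

lemma aux_infty_mem_frob (hsp : B.Semipositive) {q : ℕ} (hq : 1 ≤ q) :
    B.infty ∈ B.frob q B.nplus :=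
  ⟨B.smul q B.infty, ⟨B.infty, aux_infty_nplus B hsp, rfl⟩, B.zero,
    by rw [aux_smul_infty B hq, aux_add_zero]⟩

/-- Extract count-many copies. -/
lemma aux_extract {l gs : List X} (a : X)
    (h : List.Forall₂ (fun b g => ∃ m, b = B.add g m) l gs) :
    ∀ q : ℕ, q ≤ gs.count a → ∃ m, B.listSum l = B.add (B.smul q a) m := by
  induction h with
  | nil =>
    intro q hq
    simp only [List.count_nil, Nat.le_zero] at hq
    subst hq
    exact ⟨B.zero, (B.zero_add _).symm⟩
  | @cons b g l gs hbg _ ih =>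
    intro q hq
    obtain ⟨m₀, rfl⟩ := hbg
    match q with
    | 0 => exact ⟨B.listSum (B.add g m₀ :: l), (B.zero_add _).symm⟩
    | q + 1 =>
      by_cases hg : a = g
      · subst hg
        have : q ≤ gs.count a := by
          have : List.count a (a :: gs) = List.count a gs + 1 := List.count_cons_self
          omega
        obtain ⟨m₁, hm₁⟩ := ih q this
        refine ⟨B.add m₀ m₁, ?_⟩
        rw [aux_listSum_cons, hm₁, aux_smul_succ, aux_add_add_add]
      · have : q + 1 ≤ gs.count a := by
          rwa [List.count_cons_of_ne (Ne.symm hg)] at hq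
        obtain ⟨m₁, hm₁⟩ := ih _ this
        refine ⟨B.add (B.add g m₀) m₁, ?_⟩
        rw [aux_listSum_cons, hm₁, aux_add_left_comm]

lemma aux_choose_gs {S : Finset X} {l : List X}
    (h : ∀ b ∈ l, ∃ g ∈ S, ∃ m, b = B.add g m) :
    ∃ gs : List X, List.Forall₂ (fun b g => ∃ m, b = B.add g m) l gs ∧
      ∀ g ∈ gs, g ∈ S := by
  induction l with
  | nil => exact ⟨[], List.Forall₂.nil, by simp⟩
  | cons b l ih =>
    obtain ⟨g, hg, m, hm⟩ := h b List.mem_cons_self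
    obtain ⟨gs, h1, h2⟩ := ih fun c hc => h c (List.mem_cons_of_mem _ hc)
    refine ⟨g :: gs, List.Forall₂.cons ⟨m, hm⟩ h1, ?_⟩
    intro x hx
    rcases List.mem_cons.1 hx with rfl | hx
    · exact hg
    · exact h2 x hx

lemma aux_length_le_sum_count {S : Finset X} {gs : List X}
    (h : ∀ g ∈ gs, g ∈ S) : gs.length ≤ ∑ a ∈ S, gs.count a := by
  classical
  induction gs with
  | nil => simp
  | cons g gs ih =>
    have hg : g ∈ S := h g List.mem_cons_self
    have ih' := ih fun x hx => h x (List.mem_cons_of_mem _ hx)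
    have : ∑ a ∈ S, (g :: gs).count a
        = (∑ a ∈ S, gs.count a) + ∑ a ∈ S, (if a = g then 1 else 0) := by
      rw [← Finset.sum_add_distrib]
      refine Finset.sum_congr rfl fun a _ => ?_
      by_cases hag : a = g
      · subst hag; rw [List.count_cons_self, if_pos rfl]
      · rw [List.count_cons_of_ne (Ne.symm hag), if_neg hag, Nat.add_zero]
    rw [this, Finset.sum_ite_eq' S g (fun _ => 1), if_pos hg]
    simpa using ih'

/-- Pigeonhole: some generator occurs at least `q` times. -/
lemma aux_pigeonhole {S : Finset X} {gs : List X} {q : ℕ} (hq : 1 ≤ q)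
    (h : ∀ g ∈ gs, g ∈ S) (hlen : (q - 1) * S.card + 1 ≤ gs.length) :
    ∃ a ∈ S, q ≤ gs.count a := by
  by_contra hc
  push_neg at hc
  have h1 : ∑ a ∈ S, gs.count a ≤ ∑ _a ∈ S, (q - 1) :=
    Finset.sum_le_sum fun a ha => by have := hc a ha; omega
  have h2 := aux_length_le_sum_count (S := S) h
  rw [Finset.sum_const, smul_eq_mul] at h1
  have h3 : gs.length ≤ S.card * (q - 1) := le_trans h2 h1
  have h4 : S.card * (q - 1) = (q - 1) * S.card := Nat.mul_comm _ _
  omega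

/-- Key lemma: a sufficiently high power of `N₊` lies in `[q]N₊`. -/
lemma aux_nsum_subset_frob (hfg : B.FG) (hsp : B.Semipositive) {q : ℕ} (hq : 1 ≤ q) :
    ∃ n : ℕ, 1 ≤ n ∧ B.nSum n B.nplus ⊆ B.frob q B.nplus := by
  classical
  obtain ⟨G, hG⟩ := hfg
  set S : Finset X := G.filter (fun g => g ∈ B.nplus) with hS
  refine ⟨(q - 1) * S.card + 1, by omega, ?_⟩
  rintro x ⟨l, hlen, hmem, rfl⟩
  by_cases hinf : B.infty ∈ l
  · rw [aux_listSum_infty B hinf]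
    exact aux_infty_mem_frob B hsp hq
  · have hdec : ∀ b ∈ l, ∃ g ∈ S, ∃ m, b = B.add g m := by
      intro b hb
      rcases hG b with rfl | ⟨lb, hlb, rfl⟩
      · exact absurd hb hinf
      · -- some element of lb is a non-unit
        by_cases hall : ∀ c ∈ lb, c ∈ B.unitsSet
        · exact absurd (aux_listSum_units B hall) (hmem _ hb)
        · push_neg at hall
          obtain ⟨g, hgl, hgu⟩ := hall
          refine ⟨g, Finset.mem_filter.2 ⟨hlb g hgl, hgu⟩, B.listSum (lb.erase g), ?_⟩
          rw [← aux_listSum_cons]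
          exact aux_listSum_perm B (List.perm_cons_erase hgl)
    obtain ⟨gs, hf2, hgs⟩ := aux_choose_gs B hdec
    have hglen : (q - 1) * S.card + 1 ≤ gs.length := by
      rw [← hf2.length_eq]; omega
    obtain ⟨a, haS, hcount⟩ := aux_pigeonhole hq hgs hglen
    obtain ⟨m, hm⟩ := aux_extract B a hf2 q hcount
    exact ⟨B.smul q a, ⟨a, (Finset.mem_filter.1 haS).2, rfl⟩, m, hm⟩

end Aux
section Main

open BinoidOn

variable {X : Type} (B : BinoidOn X)

/-- The separation ideal. -/
local notation "Isep" => (⋂ n ∈ Set.Ici 1, B.nSum n B.nplus)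

lemma aux_Isep_sub_nplus : Isep ⊆ B.nplus := by
  intro x hx
  have h1 : x ∈ B.nSum 1 B.nplus := Set.mem_iInter₂.1 hx 1 (Set.mem_Ici.2 (le_refl 1))
  obtain ⟨l, hlen, hmem, rfl⟩ := h1
  match l, hlen with
  | [a], _ =>
    have : B.listSum [a] = a := by
      show B.add a B.zero = a
      exact aux_add_zero B a
    rw [this]
    exact hmem a (List.mem_singleton_self a)

lemma aux_zero_not_genIdeal (hsp : B.Semipositive) : B.zero ∉ B.genIdeal Isep := by
  rintro ⟨i, hi, m, hm⟩
  exact aux_Isep_sub_nplus B hi ⟨m, hm.symm⟩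

lemma aux_frob_isIdeal_closed {q : ℕ} {a : X} (ha : a ∈ B.frob q B.nplus) (x : X) :
    B.add a x ∈ B.frob q B.nplus := B.genIdeal_closed ha x

lemma aux_genIdeal_sub_frob (hfg : B.FG) (hsp : B.Semipositive) (q : ℕ) :
    B.genIdeal Isep ⊆ B.frob q B.nplus := by
  rcases Nat.eq_zero_or_pos q with rfl | hq
  · -- q = 0 : the Frobenius power is everything
    intro x _
    refine ⟨B.smul 0 B.infty, ⟨B.infty, aux_infty_nplus B hsp, rfl⟩, x, ?_⟩
    show x = B.add B.zero x
    rw [B.zero_add]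
  · obtain ⟨n, hn, hsub⟩ := aux_nsum_subset_frob B hfg hsp hq
    rintro x ⟨i, hi, m, rfl⟩
    exact aux_frob_isIdeal_closed B (hsub (Set.mem_iInter₂.1 hi n (Set.mem_Ici.2 hn))) m

section Quot

variable (hfg : B.FG) (hsp : B.Semipositive) (q : ℕ)

local notation "π" => (Quotient.mk (collapseSetoid (B.genIdeal Isep)) : X → B.ReesQuot Isep)

local notation "B'" => B.quotB Isep

lemma aux_quot_add (a b : X) : (B').add (π a) (π b) = π (B.add a b) := rfl

lemma aux_quot_smul (n : ℕ) (a : X) : (B').smul n (π a) = π (B.smul n a) := by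
  induction n with
  | zero => rfl
  | succ n ih =>
    show (B').add (π a) ((B').smul n (π a)) = _
    rw [ih]
    rfl

lemma aux_quot_unit_iff (hsp : B.Semipositive) (u : X) :
    π u ∈ (B').unitsSet ↔ u ∈ B.unitsSet := by
  constructor
  · rintro ⟨a', ha'⟩
    obtain ⟨a, rfl⟩ := Quotient.exists_rep a'
    rw [aux_quot_add] at ha'
    have : B.add u a = B.zero ∨ (B.add u a ∈ B.genIdeal Isep ∧ B.zero ∈ B.genIdeal Isep) :=
      Quotient.exact ha'
    rcases this with h | h
    · exact ⟨a, h⟩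
    · exact absurd h.2 (aux_zero_not_genIdeal B hsp)
  · rintro ⟨a, ha⟩
    exact ⟨π a, by rw [aux_quot_add, ha]; rfl⟩

lemma aux_quot_nplus_iff (hsp : B.Semipositive) (u : X) :
    π u ∈ (B').nplus ↔ u ∈ B.nplus :=
  not_congr (aux_quot_unit_iff B hsp u)

lemma aux_frob_image (hsp : B.Semipositive) (q : ℕ) :
    (B').frob q (B').nplus = π '' (B.frob q B.nplus) := by
  ext z
  constructor
  · rintro ⟨y, ⟨a', ha', rfl⟩, m', rfl⟩
    obtain ⟨a, rfl⟩ := Quotient.exists_rep a'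
    obtain ⟨m, rfl⟩ := Quotient.exists_rep m'
    rw [aux_quot_smul, aux_quot_add]
    exact ⟨B.add (B.smul q a) m,
      ⟨B.smul q a, ⟨a, (aux_quot_nplus_iff B hsp a).1 ha', rfl⟩, m, rfl⟩, rfl⟩
  · rintro ⟨x, ⟨y, ⟨a, ha, rfl⟩, m, rfl⟩, rfl⟩
    exact ⟨(B').smul q (π a), ⟨π a, (aux_quot_nplus_iff B hsp a).2 ha, rfl⟩, π m,
      by rw [aux_quot_smul, aux_quot_add]⟩

end Quot

end Main
section Final

open BinoidOn

variable {X : Type} (B : BinoidOn X)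

local notation "Isep" => (⋂ n ∈ Set.Ici 1, B.nSum n B.nplus)
local notation "π" => (Quotient.mk (collapseSetoid (B.genIdeal Isep)) : X → B.ReesQuot Isep)
local notation "B'" => B.quotB Isep

lemma aux_card_eq (hfg : B.FG) (hsp : B.Semipositive) (q : ℕ) :
    Nat.card ((B').hkQuot q) = Nat.card (B.hkQuot q) := by
  have hJF : B.genIdeal Isep ⊆ B.frob q B.nplus := aux_genIdeal_sub_frob B hfg hsp q
  have himg := aux_frob_image B hsp q
  refine (Nat.card_congr (Equiv.ofBijective ?_ ⟨?_, ?_⟩)).symm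
  · -- the map B.hkQuot q → (B').hkQuot q
    refine Quotient.map π ?_
    rintro x y (rfl | ⟨hx, hy⟩)
    · exact Or.inl rfl
    · exact Or.inr ⟨by rw [himg]; exact ⟨x, hx, rfl⟩, by rw [himg]; exact ⟨y, hy, rfl⟩⟩
  · -- injective
    rintro ⟨x⟩ ⟨y⟩ h
    have h' : (collapseSetoid ((B').frob q (B').nplus)).r (π x) (π y) := Quotient.exact h
    have key : ∀ z : X, π z ∈ (B').frob q (B').nplus → z ∈ B.frob q B.nplus := by
      intro z hz
      rw [himg] at hz
      obtain ⟨w, hw, hwz⟩ := hz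
      rcases (Quotient.exact hwz : (collapseSetoid (B.genIdeal Isep)).r w z) with rfl | ⟨_, h2⟩
      · exact hw
      · exact hJF h2
    rcases h' with h' | ⟨h1, h2⟩
    · rcases (Quotient.exact h' : (collapseSetoid (B.genIdeal Isep)).r x y) with rfl | ⟨h1, h2⟩
      · rfl
      · exact Quotient.sound (Or.inr ⟨hJF h1, hJF h2⟩)
    · exact Quotient.sound (Or.inr ⟨key x h1, key y h2⟩)
  · -- surjective
    rintro ⟨z⟩
    obtain ⟨x, rfl⟩ := Quotient.exists_rep z
    exact ⟨Quotient.mk _ x, rfl⟩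

end Final

/-- For a finitely generated semipositive binoid `N`, the separation
`N^sep = N/⋂ₙ nN₊` has the same Hilbert–Kunz function as `N`. -/
theorem stmt16 {X : Type} (B : BinoidOn X) (hfg : B.FG) (hsp : B.Semipositive) :
    ∀ q : ℕ, (B.quotB (⋂ n ∈ Set.Ici 1, B.nSum n B.nplus)).hkf q = B.hkf q := by
  intro q
  unfold BinoidOn.hkf
  rw [aux_card_eq B hfg hsp q]
end

section
/- Let Δ be a simplicial complex with associated simplicial binoid M_Δ = F(V)/I_Δ. Then the Hilbert-Kunz multiplicity of M_Δ exists and equals the number of facets of Δ of maximal dimension. -/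
set_option linter.unusedSectionVars false

namespace Stmt19

variable {V : Type} [Fintype V] [DecidableEq V]

/-- The support of a function. -/
def supp (f : V → ℕ) : Finset V := Finset.univ.filter fun v => f v ≠ 0

lemma mem_supp {f : V → ℕ} {v : V} : v ∈ supp f ↔ f v ≠ 0 := by simp [supp]

abbrev BV (V : Type) [Fintype V] : BinoidOn (WithTop (V → ℕ)) := withTopBinoid (V → ℕ)

/-- The Stanley–Reisner ideal. -/
def Idl (Delta : Finset (Finset V)) : Set (WithTop (V → ℕ)) :=
  {x | ∀ f : V → ℕ, x = ↑f → (Finset.univ.filter fun v => f v ≠ 0) ∉ Delta}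

variable (Delta : Finset (Finset V))

lemma coe_mem_Idl {f : V → ℕ} :
    (↑f : WithTop (V → ℕ)) ∈ Idl Delta ↔ supp f ∉ Delta := by
  constructor
  · intro h; exact h f rfl
  · intro h g hg
    rw [WithTop.coe_eq_coe] at hg
    subst hg; exact h

lemma top_mem_Idl : (⊤ : WithTop (V → ℕ)) ∈ Idl Delta := by
  intro f hf; exact absurd hf (by simp)

lemma zero_not_mem_Idl (hne : ∅ ∈ Delta) : (0 : WithTop (V → ℕ)) ∉ Idl Delta := by
  intro h
  have := h 0 rfl
  simp only [Pi.zero_apply, ne_eq, not_true_eq_false, Finset.filter_false] at this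
  exact this hne

variable (hne : ∅ ∈ Delta) (hdown : ∀ F ∈ Delta, ∀ G, G ⊆ F → G ∈ Delta)

include hdown in
lemma add_mem_Idl {x : WithTop (V → ℕ)} (hx : x ∈ Idl Delta) (y : WithTop (V → ℕ)) :
    x + y ∈ Idl Delta := by
  induction x using WithTop.recTopCoe with
  | top => rw [WithTop.top_add]; exact top_mem_Idl Delta
  | coe f =>
    induction y using WithTop.recTopCoe with
    | top => rw [WithTop.add_top]; exact top_mem_Idl Delta
    | coe g =>
      rw [← WithTop.coe_add, coe_mem_Idl]
      rw [coe_mem_Idl] at hx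
      intro hmem
      exact hx (hdown _ hmem (supp f) (by
        intro v hv
        rw [mem_supp] at hv ⊢
        simp only [Pi.add_apply]
        omega))

include hdown in
lemma genIdl : (BV V).genIdeal (Idl Delta) = Idl Delta := by
  ext x
  constructor
  · rintro ⟨a, ha, n, rfl⟩
    exact add_mem_Idl Delta hdown ha n
  · intro hx
    exact ⟨x, hx, 0, by simp [BinoidOn.add, BV, withTopBinoid]⟩

/-- The Rees quotient binoid. -/
abbrev QB : BinoidOn ((BV V).ReesQuot (Idl Delta)) := (BV V).quotB (Idl Delta)

/-- Class of an element in the Rees quotient. -/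
abbrev mkq (x : WithTop (V → ℕ)) : (BV V).ReesQuot (Idl Delta) :=
  Quotient.mk (collapseSetoid ((BV V).genIdeal (Idl Delta))) x

lemma mkq_surjective : Function.Surjective (mkq Delta) := Quotient.exists_rep

include hdown in
lemma mkq_eq_mkq {x y : WithTop (V → ℕ)} :
    mkq Delta x = mkq Delta y ↔ x = y ∨ (x ∈ Idl Delta ∧ y ∈ Idl Delta) := by
  rw [Quotient.eq, genIdl Delta hdown]
  exact Iff.rfl

lemma quot_add (x y : WithTop (V → ℕ)) :
    (QB Delta).add (mkq Delta x) (mkq Delta y) = mkq Delta (x + y) := rfl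

lemma quot_zero : (QB Delta).zero = mkq Delta 0 := rfl

lemma quot_infty : (QB Delta).infty = mkq Delta ⊤ := rfl

lemma quot_smul (n : ℕ) (x : WithTop (V → ℕ)) :
    (QB Delta).smul n (mkq Delta x) = mkq Delta ((BV V).smul n x) := by
  induction n with
  | zero => rfl
  | succ n ih =>
    show (QB Delta).add (mkq Delta x) ((QB Delta).smul n (mkq Delta x)) = _
    rw [ih, quot_add]
    rfl

lemma smul_coe (n : ℕ) (f : V → ℕ) :
    (BV V).smul n (↑f : WithTop (V → ℕ)) = ↑(fun v => n * f v : V → ℕ) := by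
  induction n with
  | zero =>
    show (withTopBinoid (V → ℕ)).zero = _
    have h0 : (fun v => 0 * f v : V → ℕ) = 0 := by funext v; simp
    rw [h0]
    rfl
  | succ n ih =>
    show (↑f + (BV V).smul n ↑f : WithTop (V → ℕ)) = _
    rw [ih, ← WithTop.coe_add, WithTop.coe_eq_coe]
    funext v
    simp only [Pi.add_apply]
    ring

lemma smul_top {n : ℕ} (hn : 1 ≤ n) :
    (BV V).smul n (⊤ : WithTop (V → ℕ)) = ⊤ := by
  cases n with
  | zero => omega
  | succ m =>
    show (⊤ + (BV V).smul m ⊤ : WithTop (V → ℕ)) = ⊤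
    rw [WithTop.top_add]

include hne hdown in
lemma units_eq : (QB Delta).unitsSet = {mkq Delta 0} := by
  ext c
  constructor
  · rintro ⟨a, ha⟩
    obtain ⟨x, rfl⟩ := mkq_surjective Delta c
    obtain ⟨y, rfl⟩ := mkq_surjective Delta a
    rw [quot_add] at ha
    have : x + y = 0 ∨ (x + y ∈ Idl Delta ∧ (0 : WithTop (V → ℕ)) ∈ Idl Delta) := by
      rw [← mkq_eq_mkq Delta hdown]; exact ha
    rcases this with h | ⟨_, h0⟩
    · induction x using WithTop.recTopCoe with
      | top => rw [WithTop.top_add] at h; exact absurd h (by simp)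
      | coe f =>
        induction y using WithTop.recTopCoe with
        | top => rw [WithTop.add_top] at h; exact absurd h (by simp)
        | coe g =>
          rw [← WithTop.coe_add, show (0 : WithTop (V → ℕ)) = ↑(0 : V → ℕ) from rfl,
            WithTop.coe_eq_coe] at h
          have : f = 0 := by
            funext v
            have := congrFun h v
            simp only [Pi.add_apply, Pi.zero_apply] at this ⊢
            omega
          subst this
          rfl
    · exact absurd h0 (zero_not_mem_Idl Delta hne)
  · rintro rfl
    exact ⟨mkq Delta 0, by rw [quot_add, quot_zero]; norm_num⟩

include hne hdown in
lemma mkq_mem_nplus {x : WithTop (V → ℕ)} :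
    mkq Delta x ∈ (QB Delta).nplus ↔ x ≠ 0 := by
  rw [BinoidOn.nplus, Set.mem_compl_iff, units_eq Delta hne hdown]
  simp only [Set.mem_singleton_iff]
  rw [mkq_eq_mkq Delta hdown]
  constructor
  · intro h rfl; exact h (Or.inl rfl)
  · rintro h (rfl | ⟨_, h0⟩)
    · exact h rfl
    · exact zero_not_mem_Idl Delta hne h0

/-! ### Basis vectors -/

/-- The basis vector at `v`. -/
def ev (v : V) : V → ℕ := fun w => if w = v then 1 else 0

lemma ev_self (v : V) : ev v v = 1 := by simp [ev]

lemma ev_ne {v w : V} (h : w ≠ v) : ev (V := V) v w = 0 := by simp [ev, h]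

lemma ev_ne_zero (v : V) : ev (V := V) v ≠ 0 := by
  intro h
  have := congrFun h v
  rw [ev_self] at this
  exact one_ne_zero this

lemma decomp_ev {f : V → ℕ} {v : V} (h : f v ≠ 0) :
    f = ev v + fun w => if w = v then f v - 1 else f w := by
  funext w
  by_cases hw : w = v
  · subst hw; simp only [Pi.add_apply, ev_self, eq_self_iff_true, if_true]; omega
  · simp only [Pi.add_apply, ev_ne hw, if_neg hw]; omega

/-! ### Prime ideals of the quotient -/

lemma top_mem_prime {P : Set ((BV V).ReesQuot (Idl Delta))} (hP : (QB Delta).IsPrime P) :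
    mkq Delta ⊤ ∈ P := by
  obtain ⟨⟨⟨c, hc⟩, hcl⟩, _, _⟩ := hP
  obtain ⟨x, rfl⟩ := mkq_surjective Delta c
  have := hcl _ hc (mkq Delta ⊤)
  rw [quot_add, WithTop.add_top] at this
  exact this

lemma zero_not_mem_prime {P : Set ((BV V).ReesQuot (Idl Delta))} (hP : (QB Delta).IsPrime P) :
    mkq Delta 0 ∉ P := by
  intro h0
  apply hP.2.1
  ext c
  simp only [Set.mem_univ, iff_true]
  obtain ⟨x, rfl⟩ := mkq_surjective Delta c
  have := hP.1.2 _ h0 (mkq Delta x)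
  rw [quot_add, zero_add] at this
  exact this

include hne hdown in
/-- Degree induction: if no generator of the support of `f` is in a prime `P`,
then the class of `f` is not in `P`. -/
lemma claim_not_mem {P : Set ((BV V).ReesQuot (Idl Delta))} (hP : (QB Delta).IsPrime P)
    (f : V → ℕ) (h : ∀ v, f v ≠ 0 → mkq Delta ↑(ev v) ∉ P) :
    mkq Delta ↑f ∉ P := by
  generalize hn : (∑ v, f v) = n
  induction n using Nat.strong_induction_on generalizing f with
  | _ n ih =>
    by_cases hf0 : f = 0
    · subst hf0
      intro hmem
      exact zero_not_mem_prime Delta hP hmem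
    · have : ∃ v, f v ≠ 0 := by
        by_contra hc
        push_neg at hc
        exact hf0 (funext fun v => hc v)
      obtain ⟨v, hv⟩ := this
      set g : V → ℕ := fun w => if w = v then f v - 1 else f w with hg
      have hfg : f = ev v + g := decomp_ev hv
      intro hmem
      have hadd : (QB Delta).add (mkq Delta ↑(ev v)) (mkq Delta ↑g) = mkq Delta ↑f := by
        rw [quot_add, ← WithTop.coe_add, hfg]
      rcases hP.2.2 _ _ (by rw [hadd]; exact hmem) with h1 | h2
      · exact h v hv h1
      · have hlt : ∑ w, g w < n := by
          rw [← hn]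
          apply Finset.sum_lt_sum
          · intro i _
            by_cases hi : i = v
            · subst hi; simp only [hg, if_pos rfl]; omega
            · simp [hg, hi]
          · exact ⟨v, Finset.mem_univ v, by simp only [hg, if_pos rfl]; omega⟩
        exact ih _ hlt g (fun w hw => by
          by_cases hwv : w = v
          · subst hwv; exact h w hv
          · exact h w (by simpa [hg, hwv] using hw)) rfl h2

/-- The saturated set corresponding to the prime of a face. -/
def QF (F : Finset V) : Set (WithTop (V → ℕ)) :=
  {x | x = ⊤ ∨ ∃ f : V → ℕ, x = ↑f ∧ ∃ v, v ∉ F ∧ f v ≠ 0}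

/-- The prime ideal associated with a face. -/
def PF (F : Finset V) : Set ((BV V).ReesQuot (Idl Delta)) :=
  {c | ∃ x ∈ QF F, mkq Delta x = c}

include hdown in
lemma Idl_subset_QF {F : Finset V} (hF : F ∈ Delta) : Idl Delta ⊆ QF F := by
  intro x hx
  induction x using WithTop.recTopCoe with
  | top => exact Or.inl rfl
  | coe f =>
    rw [coe_mem_Idl] at hx
    right
    refine ⟨f, rfl, ?_⟩
    by_contra hc
    push_neg at hc
    apply hx
    apply hdown _ hF
    intro v hv
    rw [mem_supp] at hv
    by_contra hvF
    exact hv (hc v hvF)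

include hdown in
lemma mem_PF {F : Finset V} (hF : F ∈ Delta) {x : WithTop (V → ℕ)} :
    mkq Delta x ∈ PF Delta F ↔ x ∈ QF F := by
  constructor
  · rintro ⟨y, hy, hxy⟩
    rcases (mkq_eq_mkq Delta hdown).mp hxy with rfl | ⟨_, hx⟩
    · exact hy
    · exact Idl_subset_QF Delta hdown hF hx
  · intro hx
    exact ⟨x, hx, rfl⟩

lemma QF_add {F : Finset V} {x y : WithTop (V → ℕ)} (hx : x ∈ QF F) :
    x + y ∈ QF F := by
  rcases hx with rfl | ⟨f, rfl, v, hv, hfv⟩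
  · rw [WithTop.top_add]; exact Or.inl rfl
  · induction y using WithTop.recTopCoe with
    | top => rw [WithTop.add_top]; exact Or.inl rfl
    | coe g =>
      rw [← WithTop.coe_add]
      exact Or.inr ⟨f + g, rfl, v, hv, by simp only [Pi.add_apply]; omega⟩

include hne hdown in
lemma PF_isPrime {F : Finset V} (hF : F ∈ Delta) : (QB Delta).IsPrime (PF Delta F) := by
  refine ⟨⟨⟨mkq Delta ⊤, (mem_PF Delta hdown hF).mpr (Or.inl rfl)⟩, ?_⟩, ?_, ?_⟩
  · intro c hc d
    obtain ⟨x, rfl⟩ := mkq_surjective Delta c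
    obtain ⟨y, rfl⟩ := mkq_surjective Delta d
    rw [mem_PF Delta hdown hF] at hc
    rw [quot_add, mem_PF Delta hdown hF]
    exact QF_add hc
  · intro huniv
    have h0 : mkq Delta 0 ∈ PF Delta F := by rw [huniv]; trivial
    rw [mem_PF Delta hdown hF] at h0
    rcases h0 with h | ⟨f, hf, v, _, hfv⟩
    · exact WithTop.coe_ne_top (show ((0 : V → ℕ) : WithTop (V → ℕ)) = ⊤ from h)
    · rw [show ((0 : WithTop (V → ℕ)) = ↑(0 : V → ℕ)) from rfl, WithTop.coe_eq_coe] at hf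
      exact hfv (by rw [← hf]; rfl)
  · intro c d hcd
    obtain ⟨x, rfl⟩ := mkq_surjective Delta c
    obtain ⟨y, rfl⟩ := mkq_surjective Delta d
    rw [quot_add, mem_PF Delta hdown hF] at hcd
    rw [mem_PF Delta hdown hF, mem_PF Delta hdown hF]
    rcases hcd with h | ⟨f, hf, v, hv, hfv⟩
    · rcases WithTop.add_eq_top.mp h with rfl | rfl
      · exact Or.inl (Or.inl rfl)
      · exact Or.inr (Or.inl rfl)
    · induction x using WithTop.recTopCoe with
      | top => exact Or.inl (Or.inl rfl)
      | coe a =>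
        induction y using WithTop.recTopCoe with
        | top => exact Or.inr (Or.inl rfl)
        | coe b =>
          rw [← WithTop.coe_add, WithTop.coe_eq_coe] at hf
          have hsum : a v + b v ≠ 0 := by
            rw [show a v + b v = f v from congrFun hf v]; exact hfv
          have h1 : a v ≠ 0 ∨ b v ≠ 0 := by omega
          rcases h1 with h1 | h1
          · exact Or.inl (Or.inr ⟨a, rfl, v, hv, h1⟩)
          · exact Or.inr (Or.inr ⟨b, rfl, v, hv, h1⟩)

include hne hdown in
/-- Classification: every prime of the quotient binoid is `PF F` for a face `F`. -/
lemma prime_eq_PF {P : Set ((BV V).ReesQuot (Idl Delta))} (hP : (QB Delta).IsPrime P) :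
    ∃ F ∈ Delta, P = PF Delta F := by
  classical
  set F : Finset V := Finset.univ.filter (fun v => mkq Delta ↑(ev v) ∉ P) with hFdef
  have hmemF : ∀ v, v ∈ F ↔ mkq Delta ↑(ev v) ∉ P := by
    intro v; simp [hFdef]
  have hF : F ∈ Delta := by
    by_contra hFn
    set χ : V → ℕ := fun v => if v ∈ F then 1 else 0 with hχ
    have hsupp : supp χ = F := by
      ext v
      rw [mem_supp]
      by_cases hv : v ∈ F <;> simp [hχ, hv]
    have hχI : (↑χ : WithTop (V → ℕ)) ∈ Idl Delta := by
      rw [coe_mem_Idl, hsupp]; exact hFn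
    have hχtop : mkq Delta ↑χ = mkq Delta ⊤ := by
      rw [mkq_eq_mkq Delta hdown]
      exact Or.inr ⟨hχI, top_mem_Idl Delta⟩
    have : mkq Delta ↑χ ∈ P := by rw [hχtop]; exact top_mem_prime Delta hP
    refine claim_not_mem Delta hne hdown hP χ ?_ this
    intro v hv
    rw [← hmemF]
    by_cases h : v ∈ F
    · exact h
    · exact absurd (by simp [hχ, h]) hv
  refine ⟨F, hF, ?_⟩
  ext c
  obtain ⟨x, rfl⟩ := mkq_surjective Delta c
  rw [mem_PF Delta hdown hF]
  constructor
  · intro hxP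
    induction x using WithTop.recTopCoe with
    | top => exact Or.inl rfl
    | coe f =>
      right
      refine ⟨f, rfl, ?_⟩
      by_contra hc
      push_neg at hc
      refine claim_not_mem Delta hne hdown hP f ?_ hxP
      intro v hv
      rw [← hmemF]
      by_contra hvF
      exact hv (hc v hvF)
  · intro hx
    rcases hx with rfl | ⟨f, rfl, v, hv, hfv⟩
    · exact top_mem_prime Delta hP
    · have hev : mkq Delta ↑(ev v) ∈ P := by
        by_contra hc
        exact hv ((hmemF v).mpr hc)
      set g : V → ℕ := fun w => if w = v then f v - 1 else f w with hg
      have hfg : f = ev v + g := decomp_ev hfv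
      have : (QB Delta).add (mkq Delta ↑(ev v)) (mkq Delta ↑g) = mkq Delta ↑f := by
        rw [quot_add, ← WithTop.coe_add, hfg]
      rw [← this]
      exact hP.1.2 _ hev _

include hdown in
lemma PF_subset_iff {F G : Finset V} (hF : F ∈ Delta) (hG : G ∈ Delta) :
    PF Delta F ⊆ PF Delta G ↔ G ⊆ F := by
  constructor
  · intro h v hvG
    by_contra hvF
    have h1 : mkq Delta ↑(ev v) ∈ PF Delta F :=
      (mem_PF Delta hdown hF).mpr (Or.inr ⟨ev v, rfl, v, hvF, by rw [ev_self]; omega⟩)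
    have h2 := (mem_PF Delta hdown hG).mp (h h1)
    rcases h2 with htop | ⟨f, hf, w, hw, hfw⟩
    · exact WithTop.coe_ne_top htop
    · rw [WithTop.coe_eq_coe] at hf
      subst hf
      by_cases hwv : w = v
      · subst hwv; exact hw hvG
      · rw [ev_ne hwv] at hfw; exact hfw rfl
  · intro hGF c hc
    obtain ⟨x, rfl⟩ := mkq_surjective Delta c
    rw [mem_PF Delta hdown hF] at hc
    rw [mem_PF Delta hdown hG]
    rcases hc with rfl | ⟨f, rfl, v, hv, hfv⟩
    · exact Or.inl rfl
    · exact Or.inr ⟨f, rfl, v, fun h => hv (hGF h), hfv⟩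

include hdown in
lemma PF_ssubset {F G : Finset V} (hF : F ∈ Delta) (hG : G ∈ Delta) (h : F ⊂ G) :
    PF Delta G ⊂ PF Delta F := by
  constructor
  · exact (PF_subset_iff Delta hdown hG hF).mpr h.subset
  · intro hle
    have := (PF_subset_iff Delta hdown hF hG).mp hle
    exact h.not_subset this

include hne hdown in
/-- The dimension of the quotient binoid is the max cardinality of a face. -/
lemma hasDim : (QB Delta).HasDim (Delta.sup Finset.card) := by
  classical
  set d := Delta.sup Finset.card with hd
  constructor
  · -- existence of a chain of length d
    obtain ⟨F, hFmem, hFcard⟩ := Finset.exists_mem_eq_sup Delta ⟨∅, hne⟩ Finset.card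
    set l := F.toList with hl
    have hlen : l.length = d := by rw [hl, Finset.length_toList, ← hFcard]
    have hnodup : l.Nodup := Finset.nodup_toList F
    set G : Fin (d + 1) → Finset V := fun i => (l.take i).toFinset with hG
    have hGsub : ∀ i, G i ⊆ F := by
      intro i v hv
      rw [hG, List.mem_toFinset] at hv
      exact (Finset.mem_toList).mp (List.mem_of_mem_take hv)
    have hGmem : ∀ i, G i ∈ Delta := fun i => hdown _ hFmem _ (hGsub i)
    have hGcard : ∀ i : Fin (d + 1), (G i).card = i := by
      intro i
      rw [hG]
      rw [List.toFinset_card_of_nodup (hnodup.sublist (List.take_sublist _ _))]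
      rw [List.length_take, hlen]
      omega
    have hGmono : ∀ i j : Fin (d+1), i < j → G i ⊂ G j := by
      intro i j hij
      have hsub : G i ⊆ G j := by
        intro v hv
        rw [hG, List.mem_toFinset] at hv ⊢
        have : l.take i <+: l.take j := by
          rw [List.prefix_take_iff]
          exact ⟨List.take_prefix _ _, by rw [List.length_take, hlen]; omega⟩
        exact this.subset hv
      refine Finset.ssubset_of_ssubset_of_subset ?_ (le_refl (G j))
      rw [Finset.ssubset_iff_subset_ne]
      refine ⟨hsub, ?_⟩
      intro heq
      have := hGcard i
      rw [heq, hGcard j] at this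
      omega
    refine ⟨fun i => PF Delta (G (Fin.rev i)), ?_, ?_⟩
    · intro i j hij
      have : Fin.rev j < Fin.rev i := Fin.rev_lt_rev.mpr hij
      exact PF_ssubset Delta hdown (hGmem _) (hGmem _) (hGmono _ _ this)
    · intro i
      exact PF_isPrime Delta hne hdown (hGmem _)
  · -- boundedness of chains
    intro k c hmono hprime
    have hFc : ∀ i : Fin (k + 1), ∃ F ∈ Delta, c i = PF Delta F :=
      fun i => prime_eq_PF Delta hne hdown (hprime i)
    choose Fc hFcmem hFceq using hFc
    have hanti : ∀ i j : Fin (k + 1), i < j → Fc j ⊂ Fc i := by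
      intro i j hij
      have hlt := hmono hij
      rw [hFceq i, hFceq j] at hlt
      constructor
      · exact (PF_subset_iff Delta hdown (hFcmem i) (hFcmem j)).mp hlt.le
      · intro hle
        exact hlt.ne (le_antisymm hlt.le
          ((PF_subset_iff Delta hdown (hFcmem j) (hFcmem i)).mpr hle))
    have key : ∀ n : ℕ, ∀ hn : n < k + 1, n + (Fc ⟨n, hn⟩).card ≤ (Fc ⟨0, Nat.succ_pos k⟩).card := by
      intro n
      induction n with
      | zero => intro hn; omega
      | succ m ih =>
        intro hn
        have hm : m < k + 1 := by omega
        have hss : Fc ⟨m + 1, hn⟩ ⊂ Fc ⟨m, hm⟩ := by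
          apply hanti
          exact Fin.mk_lt_mk.mpr (by omega)
        have := Finset.card_lt_card hss
        have := ih hm
        omega
    have h1 := key k (by omega)
    have h2 : (Fc ⟨0, Nat.succ_pos k⟩).card ≤ d := Finset.le_sup (hFcmem _)
    omega

/-! ### The Hilbert–Kunz function -/

include hne hdown in
lemma top_mem_frob {q : ℕ} (hq : 1 ≤ q) :
    mkq Delta ⊤ ∈ (QB Delta).frob q (QB Delta).nplus := by
  refine ⟨(QB Delta).smul q (mkq Delta ⊤),
    ⟨mkq Delta ⊤, (mkq_mem_nplus Delta hne hdown).mpr (by simp), rfl⟩, mkq Delta 0, ?_⟩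
  rw [quot_smul, smul_top hq, quot_add, add_zero]

include hne hdown in
lemma mem_frob_iff {q : ℕ} (hq : 1 ≤ q) (x : WithTop (V → ℕ)) :
    mkq Delta x ∈ (QB Delta).frob q (QB Delta).nplus ↔
      ∀ f : V → ℕ, x = ↑f → (supp f ∉ Delta ∨ ∃ v, q ≤ f v) := by
  constructor
  · rintro ⟨y, ⟨b, hb, rfl⟩, n, hc⟩
    obtain ⟨z, rfl⟩ := mkq_surjective Delta b
    obtain ⟨m, rfl⟩ := mkq_surjective Delta n
    rw [quot_smul, quot_add] at hc
    rcases (mkq_eq_mkq Delta hdown).mp hc with heq | ⟨hxI, _⟩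
    · intro f hf
      have hz : z ≠ 0 := (mkq_mem_nplus Delta hne hdown).mp hb
      induction z using WithTop.recTopCoe with
      | top =>
        rw [smul_top hq, WithTop.top_add] at heq
        rw [hf] at heq
        exact absurd heq (WithTop.coe_ne_top)
      | coe g =>
        induction m using WithTop.recTopCoe with
        | top =>
          rw [WithTop.add_top] at heq
          rw [hf] at heq
          exact absurd heq (WithTop.coe_ne_top)
        | coe h =>
          rw [smul_coe, ← WithTop.coe_add, hf, WithTop.coe_eq_coe] at heq
          have hg : g ≠ 0 := by
            intro h0; exact hz (by rw [h0]; rfl)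
          have : ∃ v, g v ≠ 0 := by
            by_contra hcon
            push_neg at hcon
            exact hg (funext fun v => hcon v)
          obtain ⟨v, hv⟩ := this
          right
          refine ⟨v, ?_⟩
          have := congrFun heq v
          simp only [Pi.add_apply] at this
          have h1 : q * 1 ≤ q * g v := Nat.mul_le_mul_left q (by omega)
          omega
    · intro f hf
      rw [hf] at hxI
      exact Or.inl ((coe_mem_Idl Delta).mp hxI)
  · intro hx
    induction x using WithTop.recTopCoe with
    | top => exact top_mem_frob Delta hne hdown hq
    | coe f =>
      rcases hx f rfl with hsupp | ⟨v, hv⟩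
      · have : mkq Delta ↑f = mkq Delta ⊤ := by
          rw [mkq_eq_mkq Delta hdown]
          exact Or.inr ⟨(coe_mem_Idl Delta).mpr hsupp, top_mem_Idl Delta⟩
        rw [this]
        exact top_mem_frob Delta hne hdown hq
      · set g : V → ℕ := fun w => if w = v then f v - q else f w with hg
        have hfg : (fun w => q * ev v w) + g = f := by
          funext w
          by_cases hw : w = v
          · subst hw
            simp only [Pi.add_apply, ev_self, hg, eq_self_iff_true, if_true]
            omega
          · simp only [Pi.add_apply, ev_ne hw, hg, if_neg hw]
            omega
        refine ⟨(QB Delta).smul q (mkq Delta ↑(ev v)),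
          ⟨mkq Delta ↑(ev v), (mkq_mem_nplus Delta hne hdown).mpr ?_, rfl⟩,
          mkq Delta ↑g, ?_⟩
        · intro h0
          exact ev_ne_zero v (WithTop.coe_eq_coe.mp h0)
        · rw [quot_smul, smul_coe, quot_add, ← WithTop.coe_add, hfg]

/-- The finite model of the Hilbert–Kunz quotient. -/
abbrev Tq (q : ℕ) : Type _ :=
  {g : V → Fin q // (Finset.univ.filter fun v => (g v : ℕ) ≠ 0) ∈ Delta}

include hne hdown in
lemma hkQuot_card {q : ℕ} (hq : 1 ≤ q) :
    Nat.card ((QB Delta).hkQuot q) = Fintype.card (Tq Delta q) + 1 := by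
  classical
  set J : Set ((BV V).ReesQuot (Idl Delta)) := (QB Delta).frob q (QB Delta).nplus with hJ
  set mkh : (BV V).ReesQuot (Idl Delta) → (QB Delta).hkQuot q :=
    Quotient.mk (collapseSetoid J) with hmkh
  have mkh_eq : ∀ c d, mkh c = mkh d ↔ c = d ∨ (c ∈ J ∧ d ∈ J) := by
    intro c d
    rw [hmkh, Quotient.eq]
    exact Iff.rfl
  set φ : Option (Tq Delta q) → (QB Delta).hkQuot q := fun o =>
    match o with
    | none => mkh (mkq Delta ⊤)
    | some g => mkh (mkq Delta ↑(fun v => (g.1 v : ℕ))) with hφ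
  have hnotJ : ∀ g : Tq Delta q, mkq Delta (↑(fun v => (g.1 v : ℕ)) : WithTop (V → ℕ)) ∉ J := by
    intro g hmem
    rw [hJ, mem_frob_iff Delta hne hdown hq] at hmem
    rcases hmem _ rfl with hsupp | ⟨v, hv⟩
    · exact hsupp g.2
    · exact absurd hv (by have := (g.1 v).isLt; omega)
  have hbij : Function.Bijective φ := by
    constructor
    · intro o o' heq
      match o, o' with
      | none, none => rfl
      | none, some g =>
        exfalso
        rw [hφ] at heq
        simp only at heq
        rcases (mkh_eq _ _).mp heq with h1 | ⟨_, h2⟩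
        · rcases (mkq_eq_mkq Delta hdown).mp h1 with h3 | ⟨_, h4⟩
          · exact (WithTop.coe_ne_top) h3.symm
          · exact (hnotJ g) (by
              rw [hJ, mem_frob_iff Delta hne hdown hq]
              intro f hf
              rw [WithTop.coe_eq_coe] at hf
              subst hf
              exact Or.inl ((coe_mem_Idl Delta).mp h4))
        · exact hnotJ g h2
      | some g, none =>
        exfalso
        rw [hφ] at heq
        simp only at heq
        rcases (mkh_eq _ _).mp heq with h1 | ⟨h2, _⟩
        · rcases (mkq_eq_mkq Delta hdown).mp h1 with h3 | ⟨h4, _⟩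
          · exact (WithTop.coe_ne_top) h3
          · exact (hnotJ g) (by
              rw [hJ, mem_frob_iff Delta hne hdown hq]
              intro f hf
              rw [WithTop.coe_eq_coe] at hf
              subst hf
              exact Or.inl ((coe_mem_Idl Delta).mp h4))
        · exact hnotJ g h2
      | some g, some g' =>
        rw [hφ] at heq
        simp only at heq
        rcases (mkh_eq _ _).mp heq with h1 | ⟨h2, _⟩
        · rcases (mkq_eq_mkq Delta hdown).mp h1 with h3 | ⟨h4, _⟩
          · rw [WithTop.coe_eq_coe] at h3
            congr 1
            apply Subtype.ext
            funext v
            have := congrFun h3 v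
            exact Fin.ext this
          · exact absurd ((coe_mem_Idl Delta).mp h4) (not_not_intro g.2)
        · exact absurd h2 (hnotJ g)
    · intro c
      obtain ⟨e, rfl⟩ : ∃ e, mkh e = c := Quotient.exists_rep c
      obtain ⟨x, rfl⟩ := mkq_surjective Delta e
      induction x using WithTop.recTopCoe with
      | top => exact ⟨none, rfl⟩
      | coe f =>
        by_cases hgood : (supp f ∈ Delta ∧ ∀ v, f v < q)
        · refine ⟨some ⟨fun v => ⟨f v, hgood.2 v⟩, ?_⟩, ?_⟩
          · exact hgood.1
          · rfl
        · have hbad : mkq Delta ↑f ∈ J := by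
            rw [hJ, mem_frob_iff Delta hne hdown hq]
            intro f' hf'
            rw [WithTop.coe_eq_coe] at hf'
            subst hf'
            by_cases hs : supp f ∈ Delta
            · right
              by_contra hcon
              push_neg at hcon
              exact hgood ⟨hs, fun v => by have := hcon v; omega⟩
            · exact Or.inl hs
          refine ⟨none, ?_⟩
          rw [hφ]
          simp only
          rw [mkh_eq]
          exact Or.inr ⟨top_mem_frob Delta hne hdown hq, hbad⟩
  have := Nat.card_congr (Equiv.ofBijective φ hbij).symm
  rw [this, Nat.card_eq_fintype_card, Fintype.card_option]

lemma card_fiber {q : ℕ} (hq : 1 ≤ q) (F : Finset V) :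
    (Finset.univ.filter fun g : V → Fin q =>
      (Finset.univ.filter fun v => (g v : ℕ) ≠ 0) = F).card = (q - 1) ^ F.card := by
  classical
  have e : {g : V → Fin q // (Finset.univ.filter fun v => (g v : ℕ) ≠ 0) = F} ≃
      ({v // v ∈ F} → {i : Fin q // (i : ℕ) ≠ 0}) := by
    refine ⟨fun g v => ⟨g.1 v.1, ?_⟩, fun h => ⟨fun v => if hv : v ∈ F then (h ⟨v, hv⟩).1
      else ⟨0, by omega⟩, ?_⟩, ?_, ?_⟩
    · have : v.1 ∈ (Finset.univ.filter fun w => (g.1 w : ℕ) ≠ 0) := by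
        rw [g.2]; exact v.2
      simpa using this
    · ext v
      simp only [Finset.mem_filter, Finset.mem_univ, true_and]
      by_cases hv : v ∈ F
      · simp only [dif_pos hv]
        exact ⟨fun _ => hv, fun _ => (h ⟨v, hv⟩).2⟩
      · simp only [dif_neg hv]
        exact ⟨fun hc => absurd rfl hc, fun hc => absurd hc hv⟩
    · intro g
      apply Subtype.ext
      funext v
      by_cases hv : v ∈ F
      · simp only [dif_pos hv]
      · simp only [dif_neg hv]
        have : v ∉ (Finset.univ.filter fun w => (g.1 w : ℕ) ≠ 0) := by rw [g.2]; exact hv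
        simp only [Finset.mem_filter, Finset.mem_univ, true_and, not_not] at this
        exact Fin.ext this.symm
    · intro h
      funext v
      simp only [dif_pos v.2]
  have h1 : (Finset.univ.filter fun g : V → Fin q =>
      (Finset.univ.filter fun v => (g v : ℕ) ≠ 0) = F).card =
      Fintype.card {g : V → Fin q // (Finset.univ.filter fun v => (g v : ℕ) ≠ 0) = F} :=
    (Fintype.card_subtype _).symm
  rw [h1, Fintype.card_congr e, Fintype.card_fun]
  congr 1
  · rw [Fintype.card_subtype]
    have : (Finset.univ.filter fun i : Fin q => (i : ℕ) ≠ 0) =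
        Finset.univ.erase ⟨0, hq⟩ := by
      ext i
      simp only [Finset.mem_filter, Finset.mem_univ, true_and, Finset.mem_erase, and_true]
      simp [Ne, Fin.ext_iff]
    rw [this, Finset.card_erase_of_mem (Finset.mem_univ _), Finset.card_univ, Fintype.card_fin]
  · exact Fintype.card_coe F

include hne hdown in
lemma hkf_eq {q : ℕ} (hq : 1 ≤ q) :
    (QB Delta).hkf q = ∑ F ∈ Delta, (q - 1) ^ F.card := by
  classical
  rw [BinoidOn.hkf, hkQuot_card Delta hne hdown hq, Nat.add_sub_cancel, Fintype.card_subtype]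
  rw [Finset.card_eq_sum_card_fiberwise
    (f := fun g : V → Fin q => Finset.univ.filter fun v => (g v : ℕ) ≠ 0)
    (t := Delta) (fun g hg => by simpa using hg)]
  apply Finset.sum_congr rfl
  intro F hF
  rw [← card_fiber hq F]
  congr 1
  ext g
  simp only [Finset.mem_filter, Finset.mem_univ, true_and]
  constructor
  · rintro ⟨_, h⟩; exact h
  · rintro h; exact ⟨by rw [h]; exact hF, h⟩

end Stmt19

/-- Let `Δ` be a simplicial complex on a finite vertex set `V`,
and `M_Δ = F(V)/I_Δ` the associated simplicial binoid.  Then the Hilbert–Kunz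
multiplicity of `M_Δ` exists and equals the number of facets of maximal
dimension. -/
theorem stmt19 {V : Type} [Fintype V] [DecidableEq V]
    (Delta : Finset (Finset V)) (hne : ∅ ∈ Delta)
    (hdown : ∀ F ∈ Delta, ∀ G, G ⊆ F → G ∈ Delta) :
    ∃ d : ℕ,
      ((withTopBinoid (V → ℕ)).quotB
          {x : WithTop (V → ℕ) | ∀ f : V → ℕ, x = ↑f →
            (Finset.univ.filter fun v => f v ≠ 0) ∉ Delta}).HasDim d ∧
      Filter.Tendsto
        (fun q : ℕ =>
          (((withTopBinoid (V → ℕ)).quotB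
              {x : WithTop (V → ℕ) | ∀ f : V → ℕ, x = ↑f →
                (Finset.univ.filter fun v => f v ≠ 0) ∉ Delta}).hkf q : ℝ)
            / (q : ℝ) ^ d)
        Filter.atTop
        (nhds ((Delta.filter fun F => F.card = Delta.sup Finset.card).card : ℝ)) := by
  classical
  have hset : {x : WithTop (V → ℕ) | ∀ f : V → ℕ, x = ↑f →
      (Finset.univ.filter fun v => f v ≠ 0) ∉ Delta} = Stmt19.Idl Delta := rfl
  rw [hset]
  refine ⟨Delta.sup Finset.card, Stmt19.hasDim Delta hne hdown, ?_⟩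
  set d := Delta.sup Finset.card with hd
  clear_value d
  have hkfe : ∀ q : ℕ, 1 ≤ q →
      ((((withTopBinoid (V → ℕ)).quotB (Stmt19.Idl Delta)).hkf q : ℝ))
        = ∑ F ∈ Delta, ((q : ℝ) - 1) ^ F.card := by
    intro q hq
    rw [Stmt19.hkf_eq Delta hne hdown hq]
    push_cast [Nat.cast_sub hq]
    rfl
  have hsum : Filter.Tendsto
      (fun q : ℕ => ∑ F ∈ Delta, (((q : ℝ) - 1) ^ F.card / (q : ℝ) ^ d))
      Filter.atTop (nhds (((Delta.filter fun F => F.card = d).card : ℝ))) := by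
    have hterm : ∀ F ∈ Delta, Filter.Tendsto
        (fun q : ℕ => ((q : ℝ) - 1) ^ F.card / (q : ℝ) ^ d) Filter.atTop
        (nhds (if F.card = d then (1 : ℝ) else 0)) := by
      intro F hF
      have hk : F.card ≤ d := by rw [hd]; exact Finset.le_sup hF
      have hzero : Filter.Tendsto (fun q : ℕ => 1 / (q : ℝ)) Filter.atTop (nhds 0) :=
        tendsto_one_div_atTop_nhds_zero_nat
      have hbase : Filter.Tendsto (fun q : ℕ => 1 - 1 / (q : ℝ)) Filter.atTop (nhds 1) := by
        have h1 := tendsto_const_nhds (x := (1 : ℝ)) (f := Filter.atTop (α := ℕ))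
        have := h1.sub hzero
        simpa using this
      have hmain := (hbase.pow F.card).mul (hzero.pow (d - F.card))
      have hval : (1 : ℝ) ^ F.card * (0 : ℝ) ^ (d - F.card)
          = if F.card = d then (1 : ℝ) else 0 := by
        by_cases h : F.card = d
        · simp [h]
        · rw [zero_pow (by omega : d - F.card ≠ 0)]
          simp [h]
      rw [hval] at hmain
      refine Filter.Tendsto.congr' ?_ hmain
      rw [Filter.eventuallyEq_iff_exists_mem]
      refine ⟨{q : ℕ | 1 ≤ q}, Filter.eventually_ge_atTop 1, ?_⟩
      intro q hq
      simp only [Set.mem_setOf_eq] at hq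
      have hq0 : (q : ℝ) ≠ 0 := Nat.cast_ne_zero.mpr (by omega)
      have h1 : (1 - 1 / (q : ℝ)) = ((q : ℝ) - 1) / (q : ℝ) := by field_simp
      show (1 - 1 / (q : ℝ)) ^ F.card * (1 / (q : ℝ)) ^ (d - F.card)
          = ((q : ℝ) - 1) ^ F.card / (q : ℝ) ^ d
      rw [h1, div_pow, div_pow, one_pow, div_mul_div_comm, mul_one, ← pow_add]
      congr 2
      omega
    have := tendsto_finset_sum Delta hterm
    have hs : (∑ F ∈ Delta, if F.card = d then (1 : ℝ) else 0)
        = ((Delta.filter fun F => F.card = d).card : ℝ) := Finset.sum_boole _ _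
    rw [hs] at this
    exact this
  refine Filter.Tendsto.congr' ?_ hsum
  rw [Filter.eventuallyEq_iff_exists_mem]
  refine ⟨{q : ℕ | 1 ≤ q}, Filter.eventually_ge_atTop 1, ?_⟩
  intro q hq
  simp only [Set.mem_setOf_eq] at hq
  show (∑ F ∈ Delta, ((q : ℝ) - 1) ^ F.card / (q : ℝ) ^ d)
      = (((withTopBinoid (V → ℕ)).quotB (Stmt19.Idl Delta)).hkf q : ℝ) / (q : ℝ) ^ d
  rw [hkfe q hq, Finset.sum_div]
end
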